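/- For every integer n ≥ 13, the product of the first n primes (the primorial p_n#) satisfies p_n# ≥ n^n. -/

import Mathlib

set_option maxRecDepth 100000 in
lemma count_prime_le (n : ℕ) (hn : 13 ≤ n) : Nat.count Nat.Prime (3 * n + 3) ≤ n := by
  rcases le_or_gt n 32 with h | h
  · interval_cases n <;> decide
  · -- n ≥ 33, use primeCounting'_add_le with a = 6, k = 100
    have key := Nat.primeCounting'_add_le (a := 6) (k := 100) (by norm_num) (by norm_num)
      (3 * n + 3 - 100)
    have h100 : 100 + (3 * n + 3 - 100) = 3 * n + 3 := by omega
    rw [h100] at key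
    have ht : Nat.totient 6 = 2 := by decide
    have hpc : Nat.primeCounting' 100 = 25 := by decide
    rw [ht, hpc] at key
    have hcount : Nat.count Nat.Prime (3 * n + 3) = Nat.primeCounting' (3 * n + 3) := rfl
    rw [hcount]
    have hq : (3 * n + 3 - 100) = 6 * ((3 * n + 3 - 100) / 6) + (3 * n + 3 - 100) % 6 :=
      (Nat.div_add_mod _ 6).symm ▸ by omega
    have hr : (3 * n + 3 - 100) % 6 < 6 := Nat.mod_lt _ (by norm_num)
    omega

lemma prime_lb (n : ℕ) (hn : 13 ≤ n) : 3 * (n + 1) ≤ Nat.nth Nat.Prime n := by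
  by_contra hlt
  push_neg at hlt
  have : n < Nat.count Nat.Prime (3 * n + 3) :=
    (Nat.lt_nth_iff_count_lt Nat.infinite_setOf_prime).mpr
      (show Nat.nth Nat.Prime n < 3 * n + 3 by omega)
  have := count_prime_le n hn
  omega

lemma succ_pow_le (n : ℕ) (hn : 1 ≤ n) : (n + 1) ^ n ≤ 3 * n ^ n := by
  have hn0 : (0 : ℝ) < n := by exact_mod_cast hn
  have key : ((n : ℝ) + 1) ^ n ≤ 3 * (n : ℝ) ^ n := by
    have heq : (n : ℝ) + 1 = (1 + 1 / n) * n := by field_simp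
    rw [heq, mul_pow]
    have h1 : (1 + 1 / (n : ℝ)) ^ n ≤ 3 := by
      have h2 : (1 : ℝ) + 1 / n ≤ Real.exp (1 / n) := by
        have := Real.add_one_le_exp (1 / (n : ℝ)); linarith
      calc (1 + 1 / (n : ℝ)) ^ n ≤ Real.exp (1 / n) ^ n := by
            apply pow_le_pow_left₀ (by positivity) h2
        _ = Real.exp (n * (1 / n)) := (Real.exp_nat_mul _ n).symm
        _ = Real.exp 1 := by rw [mul_one_div, div_self hn0.ne']
        _ ≤ 3 := by linarith [Real.exp_one_lt_d9]
    have : (1 + 1 / (n : ℝ)) ^ n * (n : ℝ) ^ n ≤ 3 * (n : ℝ) ^ n := by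
      apply mul_le_mul_of_nonneg_right h1 (by positivity)
    linarith
  exact_mod_cast key

theorem primorial_ge_pow (n : ℕ) (hn : 13 ≤ n) :
    n ^ n ≤ ∏ j ∈ Finset.range n, Nat.nth Nat.Prime j := by
  induction n, hn using Nat.le_induction with
  | base =>
    have e : ∀ (v k : ℕ), Nat.Prime v → Nat.count Nat.Prime v = k →
        Nat.nth Nat.Prime k = v := fun v k hp hc => hc ▸ Nat.nth_count hp
    have h0 := e 2 0 (by norm_num) (by decide)
    have h1 := e 3 1 (by norm_num) (by decide)
    have h2 := e 5 2 (by norm_num) (by decide)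
    have h3 := e 7 3 (by norm_num) (by decide)
    have h4 := e 11 4 (by norm_num) (by decide)
    have h5 := e 13 5 (by norm_num) (by decide)
    have h6 := e 17 6 (by norm_num) (by decide)
    have h7 := e 19 7 (by norm_num) (by decide)
    have h8 := e 23 8 (by norm_num) (by decide)
    have h9 := e 29 9 (by norm_num) (by decide)
    have h10 := e 31 10 (by norm_num) (by decide)
    have h11 := e 37 11 (by norm_num) (by decide)
    have h12 := e 41 12 (by norm_num) (by decide)
    simp only [Finset.prod_range_succ, Finset.prod_range_zero, h0, h1, h2, h3, h4, h5,
      h6, h7, h8, h9, h10, h11, h12, one_mul]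
    norm_num
  | succ n hn ih =>
    rw [Finset.prod_range_succ]
    calc (n + 1) ^ (n + 1) = (n + 1) ^ n * (n + 1) := by rw [pow_succ]
      _ ≤ 3 * n ^ n * (n + 1) := Nat.mul_le_mul_right _ (succ_pow_le n (by omega))
      _ = n ^ n * (3 * (n + 1)) := by ring
      _ ≤ n ^ n * Nat.nth Nat.Prime n := Nat.mul_le_mul_left _ (prime_lb n hn)
      _ ≤ (∏ j ∈ Finset.range n, Nat.nth Nat.Prime j) * Nat.nth Nat.Prime n :=
          Nat.mul_le_mul_right _ ih
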